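/- arXiv:2407.06623 — 2 statements merged into one kernel-verified Lean document; each statement's English description precedes it below -/
import Mathlib

section
/- Greedy anchor assignment is optimal for interval covering: given a user whose sequence of time slots 1..T is covered by clusters, where each cluster c is visible to the user on a set of slots, and the objective is to maximize the number of consecutive slot pairs (k−1, k) assigned to the same cluster (equivalently, minimize the number of cluster switches), the greedy strategy that keeps the current cluster while it remains visible and, upon a forced switch, picks the cluster that will remain visible for the longest time, achieves the minimum possible number of switches. -/
/-- Number of cluster switches of an assignment `a` over slots `1..T`:
    the number of consecutive slot pairs `(k-1, k)` assigned to different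
    clusters (equivalently, `T - 1` minus the number of pairs assigned to the
    same cluster). -/
def Switches (T : ℕ) (a : ℕ → ℕ) : ℕ :=
  ((Finset.Icc 2 T).filter (fun k => a k ≠ a (k - 1))).card

/-- Optimality of the greedy anchor assignment (Theorem 2 of the paper):
    with time slots `1..T`, clusters `c` with visibility sets `vis c` that are
    intervals, any greedy assignment `g` — valid, keeping the current cluster
    while it remains visible, and upon a forced switch (or initially) picking a
    cluster remaining visible for the longest time — has no more switches than
    any other valid assignment `a`. -/
theorem greedy_assignment_optimal (T : ℕ) (vis : ℕ → Finset ℕ)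
    (hinterval : ∀ c k₁ k₂ k₃, k₁ ≤ k₂ → k₂ ≤ k₃ →
      k₁ ∈ vis c → k₃ ∈ vis c → k₂ ∈ vis c)
    (g : ℕ → ℕ)
    (hgvalid : ∀ k ∈ Finset.Icc 1 T, k ∈ vis (g k))
    (hkeep : ∀ k ∈ Finset.Icc 2 T, k ∈ vis (g (k - 1)) → g k = g (k - 1))
    (hlongest : ∀ k ∈ Finset.Icc 1 T, (k = 1 ∨ g k ≠ g (k - 1)) →
      ∀ c k', k ≤ k' → (∀ t ∈ Finset.Icc k k', t ∈ vis c) →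
      ∀ t ∈ Finset.Icc k k', t ∈ vis (g k))
    (a : ℕ → ℕ)
    (havalid : ∀ k ∈ Finset.Icc 1 T, k ∈ vis (a k)) :
    Switches T g ≤ Switches T a := by
  classical
  unfold Switches
  set P : ℕ → Prop := fun j => j = 1 ∨ (2 ≤ j ∧ g j ≠ g (j - 1)) with hPdef
  have hP1 : P 1 := Or.inl rfl
  set s : ℕ → ℕ := fun k => Nat.findGreatest P (k - 1) with hsdef
  -- Key existence: within (s k, k] the assignment `a` must switch.
  have key : ∀ k, ∃ j, (k ∈ (Finset.Icc 2 T).filter (fun k => g k ≠ g (k - 1))) →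
      (j ∈ Finset.Icc (s k + 1) k ∧ a j ≠ a (j - 1)) := by
    intro k
    by_cases hk : k ∈ (Finset.Icc 2 T).filter (fun k => g k ≠ g (k - 1))
    swap
    · exact ⟨0, fun h => absurd h hk⟩
    simp only [Finset.mem_filter, Finset.mem_Icc] at hk
    obtain ⟨⟨hk2, hkT⟩, hgk⟩ := hk
    have hs1 : 1 ≤ s k := Nat.le_findGreatest (by omega) hP1
    have hsk : s k ≤ k - 1 := Nat.findGreatest_le _
    have hPs : P (s k) := Nat.findGreatest_of_ne_zero rfl (by omega)
    -- g is constant on [s k, k-1]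
    have hgconst : ∀ j, s k ≤ j → j ≤ k - 1 → g j = g (s k) := by
      intro j
      induction j with
      | zero => intro h1 _; omega
      | succ n ih =>
        intro h1 h2
        rcases eq_or_lt_of_le h1 with heq | hlt
        · rw [← heq]
        · have hnp : ¬ P (n + 1) := Nat.findGreatest_is_greatest hlt (by omega)
          have hgn : g (n + 1) = g n := by
            by_contra hne
            exact hnp (Or.inr ⟨by omega, by simpa using hne⟩)
          rw [hgn, ih (by omega) (by omega)]
    have hknvis : k ∉ vis (g (s k)) := by
      intro hmem
      have : g (k - 1) = g (s k) := hgconst (k - 1) hsk le_rfl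
      exact hgk (hkeep k (by simp [Finset.mem_Icc]; omega) (this ▸ hmem))
    by_contra hcon
    push_neg at hcon
    have haconst : ∀ j, s k ≤ j → j ≤ k → a j = a (s k) := by
      intro j
      induction j with
      | zero => intro h1 _; omega
      | succ n ih =>
        intro h1 h2
        rcases eq_or_lt_of_le h1 with heq | hlt
        · rw [← heq]
        · have han : a (n + 1) = a n := by
            have := (hcon (n + 1)).2 (by simp [Finset.mem_Icc]; omega)
            simpa using this
          rw [han, ih (by omega) (by omega)]
    have hcover : ∀ t ∈ Finset.Icc (s k) k, t ∈ vis (a (s k)) := by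
      intro t ht
      simp only [Finset.mem_Icc] at ht
      have := havalid t (by simp [Finset.mem_Icc]; omega)
      rwa [haconst t ht.1 ht.2] at this
    have hPs' : s k = 1 ∨ g (s k) ≠ g (s k - 1) := by
      rcases hPs with h | h
      · exact Or.inl h
      · exact Or.inr h.2
    have := hlongest (s k) (by simp [Finset.mem_Icc]; omega) hPs'
      (a (s k)) k (by omega) hcover k (by simp [Finset.mem_Icc]; omega)
    exact hknvis this
  choose f hf using key
  apply Finset.card_le_card_of_injOn f
  · intro k hk
    obtain ⟨hmem, hsw⟩ := hf k hk
    simp only [Finset.mem_coe, Finset.mem_filter, Finset.mem_Icc] at hk hmem ⊢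
    have hs1 : 1 ≤ s k := Nat.le_findGreatest (by omega) hP1
    exact ⟨⟨by omega, by omega⟩, hsw⟩
  · have hmono : ∀ k k', k ∈ (Finset.Icc 2 T).filter (fun k => g k ≠ g (k - 1)) →
        k' ∈ (Finset.Icc 2 T).filter (fun k => g k ≠ g (k - 1)) → k < k' → f k < f k' := by
      intro k k' hk hk' hlt
      obtain ⟨hm, _⟩ := hf k hk
      obtain ⟨hm', _⟩ := hf k' hk'
      simp only [Finset.mem_filter, Finset.mem_Icc] at hk hk' hm hm'
      have hPk : P k := Or.inr ⟨hk.1.1, hk.2⟩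
      have : k ≤ s k' := Nat.le_findGreatest (by omega) hPk
      omega
    intro k hk k' hk' heq
    rcases lt_trichotomy k k' with h | h | h
    · exact absurd heq (Nat.ne_of_lt (hmono k k' hk hk' h))
    · exact h
    · exact absurd heq.symm (Nat.ne_of_lt (hmono k' k hk' hk h))
end

section
/- Every partition of the torus ℤ_X × ℤ_Y into clusters each contained in some L1-ball of radius r (2r+1 ≤ min(X,Y)) requires at least ⌈XY / (2r²+2r+1)⌉ clusters. -/
/-- Cyclic hop distance on a ring of `X` nodes. -/
def cyc (X a b : ℕ) : ℕ := min ((a + X - b) % X) ((b + X - a) % X)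

/-- L1 torus hop distance on `ℤ_X × ℤ_Y`. -/
def torusD (X Y : ℕ) (p q : Fin X × Fin Y) : ℕ := cyc X p.1 q.1 + cyc Y p.2 q.2

lemma mod_sub_eq {X a b : ℕ} (ha : a < X) (hb : b < X) :
    (b + X - a) % X = if a ≤ b then b - a else b + X - a := by
  split
  · have h1 : b + X - a = X + (b - a) := by omega
    rw [h1, Nat.add_mod_left, Nat.mod_eq_of_lt (by omega)]
  · exact Nat.mod_eq_of_lt (by omega)

lemma cyc_formula {X a b : ℕ} (ha : a < X) (hb : b < X) :
    cyc X a b = min ((b + X - a) % X) (X - (b + X - a) % X) := by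
  unfold cyc
  rw [mod_sub_eq ha hb, mod_sub_eq hb ha]
  split_ifs <;> omega

def offset (X r a b : ℕ) : ℤ :=
  if (b + X - a) % X ≤ r then (((b + X - a) % X : ℕ) : ℤ)
  else (((b + X - a) % X : ℕ) : ℤ) - (X : ℤ)

lemma offset_natAbs {X r a b : ℕ} (hX : 2 * r + 1 ≤ X) (ha : a < X) (hb : b < X)
    (hc : cyc X a b ≤ r) : (offset X r a b).natAbs = cyc X a b := by
  have hf := cyc_formula ha hb
  have hdX : (b + X - a) % X < X := Nat.mod_lt _ (by omega)
  unfold offset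
  split_ifs with hcase <;> omega

lemma offset_inj {X r a b b' : ℕ} (hX : 0 < X) (ha : a < X) (hb : b < X) (hb' : b' < X)
    (h : offset X r a b = offset X r a b') : b = b' := by
  have hdX : (b + X - a) % X < X := Nat.mod_lt _ hX
  have hdX' : (b' + X - a) % X < X := Nat.mod_lt _ hX
  have hdd : (b + X - a) % X = (b' + X - a) % X := by
    unfold offset at h; split_ifs at h <;> omega
  rw [mod_sub_eq ha hb, mod_sub_eq ha hb'] at hdd
  split_ifs at hdd <;> omega

/-- The L1 ball of radius `r` in `ℤ × ℤ`, as a sigma-finset. -/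
noncomputable def ballSet (r : ℕ) : Finset (Σ _ : ℤ, ℤ) :=
  (Finset.Icc (-(r:ℤ)) r).sigma fun a =>
    Finset.Icc (-((r:ℤ) - a.natAbs)) ((r:ℤ) - a.natAbs)

lemma mem_ballSet {r : ℕ} {p : Σ _ : ℤ, ℤ} :
    p ∈ ballSet r ↔ p.1.natAbs + p.2.natAbs ≤ r := by
  obtain ⟨u, v⟩ := p
  simp only [ballSet, Finset.mem_sigma, Finset.mem_Icc]
  omega

lemma sum_formula (r : ℕ) :
    ∑ a ∈ Finset.Icc (-(r:ℤ)) r, (2 * (r - a.natAbs) + 1) = 2 * r ^ 2 + 2 * r + 1 := by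
  induction r with
  | zero => simp
  | succ n ih =>
    have hIcc : Finset.Icc (-((n+1:ℕ):ℤ)) ((n+1:ℕ):ℤ) =
        insert (-((n+1:ℕ):ℤ)) (insert (((n+1:ℕ):ℤ)) (Finset.Icc (-(n:ℤ)) n)) := by
      ext x
      simp only [Finset.mem_Icc, Finset.mem_insert]
      push_cast
      omega
    rw [hIcc,
      Finset.sum_insert (by simp only [Finset.mem_insert, Finset.mem_Icc]; push_cast; omega),
      Finset.sum_insert (by simp only [Finset.mem_Icc]; push_cast; omega)]
    have hterm1 : (-((n+1:ℕ):ℤ)).natAbs = n+1 := by omega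
    have hterm2 : (((n+1:ℕ):ℤ)).natAbs = n+1 := by omega
    have hcongr : ∑ a ∈ Finset.Icc (-(n:ℤ)) n, (2 * ((n+1 : ℕ) - a.natAbs) + 1)
        = ∑ a ∈ Finset.Icc (-(n:ℤ)) n, ((2 * (n - a.natAbs) + 1) + 2) := by
      apply Finset.sum_congr rfl
      intro a haa
      simp only [Finset.mem_Icc] at haa
      omega
    rw [hterm1, hterm2, hcongr, Finset.sum_add_distrib, ih, Finset.sum_const,
      Int.card_Icc, smul_eq_mul]
    have hcard : ((n:ℤ) + 1 - -(n:ℤ)).toNat = 2 * n + 1 := by omega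
    rw [hcard]
    have hsq : (n+1)^2 = n^2 + 2*n + 1 := by ring
    omega

lemma ballSet_card (r : ℕ) : (ballSet r).card = 2 * r ^ 2 + 2 * r + 1 := by
  rw [ballSet, Finset.card_sigma]
  rw [← sum_formula r]
  apply Finset.sum_congr rfl
  intro a ha
  simp only [Finset.mem_Icc] at ha
  rw [Int.card_Icc]
  omega

lemma cluster_card_le {X Y r : ℕ} (h : 2 * r + 1 ≤ min X Y)
    (C : Finset (Fin X × Fin Y)) (A : Fin X × Fin Y)
    (hA : ∀ s ∈ C, torusD X Y A s ≤ r) :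
    C.card ≤ 2 * r ^ 2 + 2 * r + 1 := by
  have hX : 2 * r + 1 ≤ X := le_trans h (min_le_left _ _)
  have hY : 2 * r + 1 ≤ Y := le_trans h (min_le_right _ _)
  rw [← ballSet_card r]
  apply Finset.card_le_card_of_injOn
    (fun s => ⟨offset X r A.1 s.1, offset Y r A.2 s.2⟩)
  · intro s hs
    have hd := hA s hs
    unfold torusD at hd
    simp only [Finset.mem_coe]
    rw [mem_ballSet]
    rw [offset_natAbs hX A.1.isLt s.1.isLt (by omega),
        offset_natAbs hY A.2.isLt s.2.isLt (by omega)]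
    exact hd
  · intro s hs t ht hst
    simp only [Sigma.mk.inj_iff, heq_eq_eq] at hst
    have h1 := offset_inj (by omega) A.1.isLt s.1.isLt t.1.isLt hst.1
    have h2 := offset_inj (by omega : 0 < Y) A.2.isLt s.2.isLt t.2.isLt hst.2
    ext <;> simp [h1, h2]

/-- Every partition of the torus `ℤ_X × ℤ_Y` into clusters, each contained in
    some L1-ball of radius `r` (with `2r+1 ≤ min(X,Y)`), requires at least
    `⌈XY / (2r²+2r+1)⌉` clusters. -/
theorem cluster_partition_lower_bound (X Y r : ℕ) (h : 2 * r + 1 ≤ min X Y)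
    (P : Finset (Finset (Fin X × Fin Y)))
    (hdisj : (P : Set (Finset (Fin X × Fin Y))).PairwiseDisjoint id)
    (hunion : P.sup id = Finset.univ)
    (hball : ∀ C ∈ P, ∃ A : Fin X × Fin Y, ∀ s ∈ C, torusD X Y A s ≤ r) :
    ⌈(X * Y : ℚ) / (2 * r ^ 2 + 2 * r + 1)⌉ ≤ P.card := by
  set N := 2 * r ^ 2 + 2 * r + 1 with hN
  have hcardsum : X * Y = ∑ C ∈ P, C.card := by
    have h2 : (Finset.univ : Finset (Fin X × Fin Y)) = P.biUnion id := by
      rw [← Finset.sup_eq_biUnion, hunion]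
    calc X * Y = (Finset.univ : Finset (Fin X × Fin Y)).card := by simp
      _ = (P.biUnion id).card := by rw [h2]
      _ = ∑ C ∈ P, (id C).card :=
          Finset.card_biUnion (fun C hC D hD hCD => hdisj hC hD hCD)
      _ = ∑ C ∈ P, C.card := rfl
  have hbound : X * Y ≤ P.card * N := by
    rw [hcardsum]
    calc ∑ C ∈ P, C.card ≤ ∑ C ∈ P, N := by
          apply Finset.sum_le_sum
          intro C hC
          obtain ⟨A, hA⟩ := hball C hC
          exact cluster_card_le h C A hA
      _ = P.card * N := by rw [Finset.sum_const, smul_eq_mul]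
  rw [Int.ceil_le, div_le_iff₀ (by positivity)]
  push_cast
  exact_mod_cast hbound
end
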